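/- Completeness of SkMBiCA with respect to relational models: if v(A) ⊆ v(B) in every SkMBiCA model, then A ⊢ B is provable in SkMBiCA. In particular, the canonical model, whose worlds are formulae with A ≤ B iff A ⊢ B, LABС iff C ⊢ A⊗ᴸB, RABC iff C ⊢ A⊗ᴿB, and v(A) = {B : B ⊢ A}, is a SkMBiCA model. -/
import Mathlib


/-- Formulae of skew monoidal bi-closed logic:
atoms, unit I, left/right tensors and implications. -/
inductive Fma2 : Type
  | atom : ℕ → Fma2
  | I : Fma2
  | tL : Fma2 → Fma2 → Fma2   -- A ⊗ᴸ B
  | lL : Fma2 → Fma2 → Fma2   -- A ⊸ᴸ B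
  | tR : Fma2 → Fma2 → Fma2   -- A ⊗ᴿ B
  | lR : Fma2 → Fma2 → Fma2   -- A ⊸ᴿ B

/-- Derivability in the axiomatic calculus SkMBiCA: `ADer A B` means `A ⊢ B`. -/
inductive ADer : Fma2 → Fma2 → Prop
  | id {A} : ADer A A
  | comp {A B C} : ADer A B → ADer B C → ADer A C
  | tensL {A B C D} : ADer A C → ADer B D → ADer (Fma2.tL A B) (Fma2.tL C D)
  | lolliL {A B C D} : ADer C A → ADer B D → ADer (Fma2.lL A B) (Fma2.lL C D)
  | lolliR {A B C D} : ADer C A → ADer B D → ADer (Fma2.lR A B) (Fma2.lR C D)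
  | lam {A} : ADer (Fma2.tL Fma2.I A) A
  | rho {A} : ADer A (Fma2.tL A Fma2.I)
  | alpha {A B C} : ADer (Fma2.tL (Fma2.tL A B) C) (Fma2.tL A (Fma2.tL B C))
  | gamma {A B} : ADer (Fma2.tL A B) (Fma2.tR B A)
  | gammaInv {A B} : ADer (Fma2.tR A B) (Fma2.tL B A)
  | pi {A B C} : ADer (Fma2.tL A B) C → ADer A (Fma2.lL B C)
  | piInv {A B C} : ADer A (Fma2.lL B C) → ADer (Fma2.tL A B) C
  | piR {A B C} : ADer (Fma2.tR A B) C → ADer A (Fma2.lR B C)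
  | piRInv {A B C} : ADer A (Fma2.lR B C) → ADer (Fma2.tR A B) C

section Frames

variable {W : Type}

/-- `IsSkFrame le I L R` : ⟨W, ≤, I, L, R⟩ is a SkMBiCA frame. -/
structure IsSkFrame (le : W → W → Prop) (I : Set W)
    (L R : W → W → W → Prop) : Prop where
  refl : ∀ a, le a a
  trans : ∀ {a b c}, le a b → le b c → le a c
  I_down : ∀ {a b}, le a b → b ∈ I → a ∈ I
  L_up₁ : ∀ {a a' b c}, le a a' → L a b c → L a' b c
  L_up₂ : ∀ {a b b' c}, le b b' → L a b c → L a b' c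
  L_down₃ : ∀ {a b c c'}, le c' c → L a b c → L a b c'
  R_up₁ : ∀ {a a' b c}, le a a' → R a b c → R a' b c
  R_up₂ : ∀ {a b b' c}, le b b' → R a b c → R a b' c
  R_down₃ : ∀ {a b c c'}, le c' c → R a b c → R a b c'
  LR_reverse : ∀ a b c, L a b c ↔ R b a c
  LSA : ∀ {a b c d x}, L a b x → L x c d → ∃ y, L b c y ∧ L a y d
  LSLU : ∀ {a b e}, e ∈ I → L e a b → le b a
  LSRU : ∀ a, ∃ e ∈ I, L a e a

/-- `IsValuation le I L R v` : `v` is a valuation on the frame ⟨W, ≤, I, L, R⟩. -/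
structure IsValuation (le : W → W → Prop) (I : Set W)
    (L R : W → W → W → Prop) (v : Fma2 → Set W) : Prop where
  down : ∀ (A : Fma2) {a b}, le a b → b ∈ v A → a ∈ v A
  unit : v Fma2.I = I
  tensL : ∀ A B, v (Fma2.tL A B) = {c | ∃ a ∈ v A, ∃ b ∈ v B, L a b c}
  lolliL : ∀ A B, v (Fma2.lL A B) = {c | ∀ a ∈ v A, ∀ b, L c a b → b ∈ v B}
  tensR : ∀ A B, v (Fma2.tR A B) = {c | ∃ a ∈ v A, ∃ b ∈ v B, R a b c}
  lolliR : ∀ A B, v (Fma2.lR A B) = {c | ∀ a ∈ v A, ∀ b, R c a b → b ∈ v B}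

end Frames

/-- Completeness of SkMBiCA w.r.t. relational models, together with the fact
that the canonical model (worlds are formulae, `A ≤ B` iff `A ⊢ B`,
`L A B C` iff `C ⊢ A ⊗ᴸ B`, `R A B C` iff `C ⊢ A ⊗ᴿ B`,
`v A = {B : B ⊢ A}`) is a SkMBiCA model. -/
theorem completeness :
    (∀ A B : Fma2,
      (∀ (W : Type) (le : W → W → Prop) (I : Set W) (L R : W → W → W → Prop)
        (v : Fma2 → Set W), IsSkFrame le I L R → IsValuation le I L R v →
        v A ⊆ v B) →
      ADer A B) ∧
    IsSkFrame (W := Fma2) ADer {B | ADer B Fma2.I}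
      (fun A B C => ADer C (Fma2.tL A B)) (fun A B C => ADer C (Fma2.tR A B)) ∧
    IsValuation (W := Fma2) ADer {B | ADer B Fma2.I}
      (fun A B C => ADer C (Fma2.tL A B)) (fun A B C => ADer C (Fma2.tR A B))
      (fun A => {B | ADer B A}) := by
  have tR : ∀ {A B C D : Fma2}, ADer A C → ADer B D →
      ADer (Fma2.tR A B) (Fma2.tR C D) := fun h h' =>
    (ADer.gammaInv.comp (ADer.tensL h' h)).comp ADer.gamma
  have frame : IsSkFrame (W := Fma2) ADer {B | ADer B Fma2.I}
      (fun A B C => ADer C (Fma2.tL A B)) (fun A B C => ADer C (Fma2.tR A B)) := by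
    refine ⟨fun _ => ADer.id, ADer.comp, ?_, ?_, ?_, ?_, ?_, ?_, ?_, ?_, ?_, ?_, ?_⟩
    · exact fun h h' => h.comp h'
    · exact fun h h' => h'.comp (ADer.tensL h ADer.id)
    · exact fun h h' => h'.comp (ADer.tensL ADer.id h)
    · exact fun h h' => h.comp h'
    · exact fun h h' => h'.comp (tR h ADer.id)
    · exact fun h h' => h'.comp (tR ADer.id h)
    · exact fun h h' => h.comp h'
    · exact fun _ _ _ => ⟨fun h => h.comp ADer.gamma, fun h => h.comp ADer.gammaInv⟩
    · intro a b c d x h1 h2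
      exact ⟨Fma2.tL b c, ADer.id,
        (h2.comp (ADer.tensL h1 ADer.id)).comp ADer.alpha⟩
    · intro a b e he h
      exact (h.comp (ADer.tensL he ADer.id)).comp ADer.lam
    · exact fun a => ⟨Fma2.I, ADer.id, ADer.rho⟩
  have val : IsValuation (W := Fma2) ADer {B | ADer B Fma2.I}
      (fun A B C => ADer C (Fma2.tL A B)) (fun A B C => ADer C (Fma2.tR A B))
      (fun A => {B | ADer B A}) := by
    refine ⟨fun A a b h h' => h.comp h', rfl, ?_, ?_, ?_, ?_⟩
    · intro A B
      ext c
      constructor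
      · exact fun h => ⟨A, ADer.id, B, ADer.id, h⟩
      · rintro ⟨a, ha, b, hb, h⟩
        exact h.comp (ADer.tensL ha hb)
    · intro A B
      ext c
      constructor
      · intro h a ha b hb
        exact (hb.comp (ADer.tensL ADer.id ha)).comp h.piInv
      · intro h
        exact ADer.pi (h A ADer.id _ ADer.id)
    · intro A B
      ext c
      constructor
      · exact fun h => ⟨A, ADer.id, B, ADer.id, h⟩
      · rintro ⟨a, ha, b, hb, h⟩
        exact h.comp (tR ha hb)
    · intro A B
      ext c
      constructor
      · intro h a ha b hb
        exact (hb.comp (tR ADer.id ha)).comp h.piRInv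
      · intro h
        exact ADer.piR (h A ADer.id _ ADer.id)
  refine ⟨fun A B h => ?_, frame, val⟩
  exact h Fma2 ADer {B | ADer B Fma2.I}
    (fun A B C => ADer C (Fma2.tL A B)) (fun A B C => ADer C (Fma2.tR A B))
    (fun A => {B | ADer B A}) frame val ADer.id
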